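/- Let w ∈ ℕⁿ with |w| = w₁+⋯+wₙ even. The semistandard Young tableaux of shape (|w|/2, |w|/2) (two rows of equal length, weakly increasing rows, strictly increasing columns, entries in {1,…,n}) with content w are in bijection with tuples ν = (ν₁,…,νₙ) ∈ ℕⁿ satisfying ν₁+⋯+νₙ = |w|/2, 0 ≤ ν_ℓ ≤ w_ℓ for all ℓ, and 2(ν₁+⋯+ν_{ℓ−1}) + ν_ℓ ≥ w₁+⋯+w_ℓ for all 1 ≤ ℓ ≤ n. -/

import Mathlib

/-- A two-row tableau of shape (k,k) with entries in {1,…,n}, encoded as a pair of rows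
`Fin k → Fin n`, is semistandard if rows are weakly increasing and columns strictly
increasing. -/
def IsSSYT {n k : ℕ} (τ : (Fin k → Fin n) × (Fin k → Fin n)) : Prop :=
  (∀ s t, s ≤ t → τ.1 s ≤ τ.1 t) ∧ (∀ s t, s ≤ t → τ.2 s ≤ τ.2 t) ∧ (∀ t, τ.1 t < τ.2 t)

/-- The content of a two-row tableau: the number of occurrences of each value. -/
def content {n k : ℕ} (τ : (Fin k → Fin n) × (Fin k → Fin n)) (i : Fin n) : ℕ :=
  (Finset.univ.filter (fun t => τ.1 t = i)).card +
    (Finset.univ.filter (fun t => τ.2 t = i)).card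

namespace SSYTAux

open Finset

variable {n k : ℕ}

/-- fiber count of a function -/
def cnt (f : Fin k → Fin n) (i : Fin n) : ℕ := (univ.filter fun t => f t = i).card

lemma cnt_sum (f : Fin k → Fin n) : ∑ i, cnt f i = k := by
  classical
  have := Finset.card_eq_sum_card_fiberwise (s := (univ : Finset (Fin k)))
    (t := (univ : Finset (Fin n))) (f := f) (fun x _ => mem_univ _)
  simpa [cnt] using this.symm

lemma sum_cnt_lt (f : Fin k → Fin n) (i : ℕ) :
    ∑ j ∈ univ.filter (fun j : Fin n => (j : ℕ) < i), cnt f j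
      = (univ.filter fun t => (f t : ℕ) < i).card := by
  classical
  rw [Finset.card_eq_sum_card_fiberwise (s := univ.filter fun t => (f t : ℕ) < i)
    (t := univ.filter (fun j : Fin n => (j : ℕ) < i)) (f := f)
    (fun x hx => by simp_all)]
  refine Finset.sum_congr rfl fun j hj => ?_
  simp only [mem_filter, mem_univ, true_and] at hj
  rw [cnt]
  congr 1
  ext t
  simp only [mem_filter, mem_univ, true_and]
  exact ⟨fun h => ⟨h ▸ hj, h⟩, fun h => h.2⟩

lemma sum_cnt_le (f : Fin k → Fin n) (ℓ : Fin n) :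
    ∑ j ∈ univ.filter (· ≤ ℓ), cnt f j
      = (univ.filter fun t => f t ≤ ℓ).card := by
  classical
  have h := sum_cnt_lt f ((ℓ : ℕ) + 1)
  have e1 : (univ.filter (fun j : Fin n => (j : ℕ) < (ℓ : ℕ) + 1)) = univ.filter (· ≤ ℓ) := by
    ext j
    simp only [mem_filter, mem_univ, true_and, Nat.lt_succ_iff]
    exact Iff.symm Fin.le_def
  have e2 : (univ.filter fun t => (f t : ℕ) < (ℓ : ℕ) + 1) = univ.filter fun t => f t ≤ ℓ := by
    ext t
    simp only [mem_filter, mem_univ, true_and, Nat.lt_succ_iff]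
    exact Iff.symm Fin.le_def
  rw [e1, e2] at h; exact h

lemma sum_cnt_lt' (f : Fin k → Fin n) (ℓ : Fin n) :
    ∑ j ∈ univ.filter (· < ℓ), cnt f j
      = (univ.filter fun t => f t < ℓ).card := by
  classical
  have h := sum_cnt_lt f (ℓ : ℕ)
  have e1 : (univ.filter (fun j : Fin n => (j : ℕ) < (ℓ : ℕ))) = univ.filter (· < ℓ) := by
    ext j
    simp only [mem_filter, mem_univ, true_and]
    exact Iff.symm Fin.lt_def
  have e2 : (univ.filter fun t => (f t : ℕ) < (ℓ : ℕ)) = univ.filter fun t => f t < ℓ := by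
    ext t
    simp only [mem_filter, mem_univ, true_and]
    exact Iff.symm Fin.lt_def
  rw [e1, e2] at h; exact h

lemma filter_le_eq_insert (ℓ : Fin n) :
    (univ.filter (· ≤ ℓ)) = insert ℓ (univ.filter (· < ℓ)) := by
  ext j
  simp only [mem_filter, mem_univ, true_and, Finset.mem_insert]
  constructor
  · intro h
    rcases lt_or_eq_of_le h with h | h
    · exact Or.inr h
    · exact Or.inl h
  · rintro (rfl | h)
    · exact le_refl _
    · exact le_of_lt h

lemma sum_filter_le_split (ν : Fin n → ℕ) (ℓ : Fin n) :
    ∑ i ∈ univ.filter (· ≤ ℓ), ν i = ∑ i ∈ univ.filter (· < ℓ), ν i + ν ℓ := by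
  rw [filter_le_eq_insert, Finset.sum_insert (by simp)]
  ring

lemma lower_char (f : Fin k → Fin n) (hf : ∀ s t, s ≤ t → f s ≤ f t) (i : ℕ) (t : Fin k) :
    (f t : ℕ) < i ↔ (t : ℕ) < (univ.filter fun s => (f s : ℕ) < i).card := by
  classical
  constructor
  · intro h
    have hsub : Finset.Iic t ⊆ univ.filter fun s => (f s : ℕ) < i := by
      intro s hs
      simp only [Finset.mem_Iic] at hs
      simp only [mem_filter, mem_univ, true_and]
      exact lt_of_le_of_lt (Fin.le_def.mp (hf s t hs)) h
    have := Finset.card_le_card hsub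
    rw [Fin.card_Iic] at this
    omega
  · intro h
    by_contra hc
    push_neg at hc
    have hsub : (univ.filter fun s => (f s : ℕ) < i) ⊆ Finset.Iio t := by
      intro s hs
      simp only [mem_filter, mem_univ, true_and] at hs
      simp only [Finset.mem_Iio]
      by_contra hst
      push_neg at hst
      exact absurd (lt_of_le_of_lt (Fin.le_def.mp (hf t s hst)) hs) (by omega)
    have := Finset.card_le_card hsub
    rw [Fin.card_Iio] at this
    omega

lemma mono_ext (f g : Fin k → Fin n) (hf : ∀ s t, s ≤ t → f s ≤ f t)
    (hg : ∀ s t, s ≤ t → g s ≤ g t) (hcnt : cnt f = cnt g) : f = g := by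
  classical
  have key : ∀ i : ℕ, (univ.filter fun s => (f s : ℕ) < i).card
      = (univ.filter fun s => (g s : ℕ) < i).card := by
    intro i
    rw [← sum_cnt_lt f i, ← sum_cnt_lt g i, hcnt]
  funext t
  have h1 : (f t : ℕ) ≤ (g t : ℕ) := by
    have h2 := (lower_char g hg ((g t : ℕ) + 1) t).mp (by omega)
    rw [← key] at h2
    have := (lower_char f hf ((g t : ℕ) + 1) t).mpr h2
    omega
  have h2 : (g t : ℕ) ≤ (f t : ℕ) := by
    have h2 := (lower_char f hf ((f t : ℕ) + 1) t).mp (by omega)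
    rw [key] at h2
    have := (lower_char g hg ((f t : ℕ) + 1) t).mpr h2
    omega
  exact Fin.ext (le_antisymm h1 h2)

def psum (c : Fin n → ℕ) (i : ℕ) : ℕ := ∑ j ∈ univ.filter (fun j : Fin n => (j : ℕ) < i), c j

lemma psum_mono (c : Fin n → ℕ) : Monotone (psum c) := by
  intro a b hab
  apply Finset.sum_le_sum_of_subset
  intro j hj
  simp only [mem_filter, mem_univ, true_and] at hj ⊢
  omega

lemma psum_zero (c : Fin n → ℕ) : psum c 0 = 0 := by
  rw [psum]
  convert Finset.sum_empty
  ext j; simp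

lemma psum_n (c : Fin n → ℕ) : psum c n = ∑ i, c i := by
  rw [psum]
  apply Finset.sum_congr _ (fun _ _ => rfl)
  ext j; simp [j.isLt]

lemma psum_succ (c : Fin n → ℕ) (i : Fin n) :
    psum c ((i : ℕ) + 1) = psum c (i : ℕ) + c i := by
  rw [psum, psum]
  have : (univ.filter (fun j : Fin n => (j : ℕ) < (i : ℕ) + 1))
      = insert i (univ.filter (fun j : Fin n => (j : ℕ) < (i : ℕ))) := by
    ext j
    simp only [mem_filter, mem_univ, true_and, Finset.mem_insert]
    constructor
    · intro h
      rcases Nat.lt_succ_iff_lt_or_eq.mp h with h | h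
      · exact Or.inr h
      · exact Or.inl (Fin.ext h)
    · rintro (rfl | h) <;> omega
  rw [this, Finset.sum_insert (by simp)]
  ring

lemma psum_eq_sum_lt (c : Fin n → ℕ) (ℓ : Fin n) :
    psum c (ℓ : ℕ) = ∑ i ∈ univ.filter (· < ℓ), c i := by
  rw [psum]
  apply Finset.sum_congr _ (fun _ _ => rfl)
  ext j
  simp only [mem_filter, mem_univ, true_and]
  exact Iff.symm Fin.lt_def

lemma build_ex (c : Fin n → ℕ) (hc : ∑ i, c i = k) (t : Fin k) :
    ∃ i, (t : ℕ) < psum c (i + 1) := by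
  have hn : 0 < n := by
    rcases Nat.eq_zero_or_pos n with h | h
    · subst h
      simp at hc
      exact absurd t.isLt (by omega)
    · exact h
  refine ⟨n - 1, ?_⟩
  have : n - 1 + 1 = n := by omega
  rw [this, psum_n, hc]
  exact t.isLt

noncomputable def build (c : Fin n → ℕ) (hc : ∑ i, c i = k) (t : Fin k) : Fin n :=
  ⟨Nat.find (build_ex c hc t), by
    have hn : 0 < n := by
      rcases Nat.eq_zero_or_pos n with h | h
      · subst h; simp at hc; exact absurd t.isLt (by omega)
      · exact h
    have h1 : Nat.find (build_ex c hc t) ≤ n - 1 := by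
      apply Nat.find_le
      have : n - 1 + 1 = n := by omega
      rw [this, psum_n, hc]
      exact t.isLt
    omega⟩

lemma build_char (c : Fin n → ℕ) (hc : ∑ i, c i = k) (t : Fin k) (i : ℕ) :
    (build c hc t : ℕ) < i ↔ (t : ℕ) < psum c i := by
  cases i with
  | zero => simp [psum_zero]
  | succ m =>
    rw [build]
    simp only
    rw [Nat.lt_succ_iff, Nat.find_le_iff]
    constructor
    · rintro ⟨j, hj, hjl⟩
      exact lt_of_lt_of_le hjl (psum_mono c (by omega))
    · intro h
      exact ⟨m, le_refl _, h⟩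

lemma build_mono (c : Fin n → ℕ) (hc : ∑ i, c i = k) (s t : Fin k) (hst : s ≤ t) :
    build c hc s ≤ build c hc t := by
  have ht : (t : ℕ) < psum c ((build c hc t : ℕ) + 1) :=
    (build_char c hc t ((build c hc t : ℕ) + 1)).mp (by omega)
  have hs : (s : ℕ) < psum c ((build c hc t : ℕ) + 1) :=
    lt_of_le_of_lt (Fin.le_def.mp hst) ht
  have := (build_char c hc s ((build c hc t : ℕ) + 1)).mpr hs
  exact Fin.le_def.mpr (by omega)

lemma build_cnt (c : Fin n → ℕ) (hc : ∑ i, c i = k) (i0 : Fin n) :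
    cnt (build c hc) i0 = c i0 := by
  classical
  have hle : psum c ((i0 : ℕ) + 1) ≤ k := by
    have := psum_mono c (show (i0 : ℕ) + 1 ≤ n from i0.isLt)
    rw [psum_n, hc] at this
    exact this
  have heq : (univ.filter fun t => build c hc t = i0)
      = univ.filter fun t : Fin k => psum c (i0 : ℕ) ≤ (t : ℕ) ∧ (t : ℕ) < psum c ((i0 : ℕ) + 1) := by
    ext t
    simp only [mem_filter, mem_univ, true_and]
    constructor
    · rintro rfl
      constructor
      · have h0 := (build_char c hc t (build c hc t : ℕ)).not.mp (lt_irrefl _)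
        omega
      · exact (build_char c hc t ((build c hc t : ℕ) + 1)).mp (by omega)
    · rintro ⟨h1, h2⟩
      have ha := (build_char c hc t ((i0 : ℕ) + 1)).mpr h2
      have hb := (build_char c hc t (i0 : ℕ)).not.mpr (by omega)
      simp only [not_lt] at hb
      exact Fin.ext (by omega)
  rw [cnt, heq]
  have : (univ.filter fun t : Fin k => psum c (i0 : ℕ) ≤ (t : ℕ) ∧ (t : ℕ) < psum c ((i0 : ℕ) + 1)).card
      = ((Finset.range k).filter fun m => psum c (i0 : ℕ) ≤ m ∧ m < psum c ((i0 : ℕ) + 1)).card := by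
    rw [Finset.card_filter, Finset.card_filter,
      ← Fin.sum_univ_eq_sum_range (fun m => if psum c (i0 : ℕ) ≤ m ∧ m < psum c ((i0 : ℕ) + 1) then 1 else 0) k]
  rw [this]
  have hico : ((Finset.range k).filter fun m => psum c (i0 : ℕ) ≤ m ∧ m < psum c ((i0 : ℕ) + 1))
      = Finset.Ico (psum c (i0 : ℕ)) (psum c ((i0 : ℕ) + 1)) := by
    ext m
    simp only [Finset.mem_filter, Finset.mem_range, Finset.mem_Ico]
    omega
  rw [hico, Nat.card_Ico, psum_succ]
  omega

end SSYTAux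

/-- For w ∈ ℕⁿ with |w| even, the semistandard Young tableaux of shape (|w|/2, |w|/2) with
content w are in bijection with tuples ν ∈ ℕⁿ with ∑ νᵢ = |w|/2, ν_ℓ ≤ w_ℓ, and
2(ν₁+⋯+ν_{ℓ−1}) + ν_ℓ ≥ w₁+⋯+w_ℓ for all ℓ; the bijection records in ν_i the number of
occurrences of i in the first row. -/
theorem stmt2 (n : ℕ) (w : Fin n → ℕ) (hw : Even (∑ i, w i)) :
    ∃ e : {τ : (Fin ((∑ i, w i) / 2) → Fin n) × (Fin ((∑ i, w i) / 2) → Fin n) //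
            IsSSYT τ ∧ content τ = w} ≃
          {ν : Fin n → ℕ // (∑ i, ν i) = (∑ i, w i) / 2 ∧ (∀ ℓ, ν ℓ ≤ w ℓ) ∧
            ∀ ℓ : Fin n, 2 * (∑ i ∈ Finset.univ.filter (· < ℓ), ν i) + ν ℓ ≥
              ∑ i ∈ Finset.univ.filter (· ≤ ℓ), w i},
      ∀ τ, (e τ).val = fun i => (Finset.univ.filter (fun t => τ.val.1 t = i)).card := by
  classical
  open Finset SSYTAux in
  set k := (∑ i, w i) / 2 with hkdef
  have h2k : ∑ i, w i = 2 * k := by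
    obtain ⟨m, hm⟩ := hw
    omega
  -- the forward map
  have Fprop : ∀ τ : {τ : (Fin k → Fin n) × (Fin k → Fin n) // IsSSYT τ ∧ content τ = w},
      (∑ i, cnt τ.val.1 i) = k ∧ (∀ ℓ, cnt τ.val.1 ℓ ≤ w ℓ) ∧
        ∀ ℓ : Fin n, 2 * (∑ i ∈ Finset.univ.filter (· < ℓ), cnt τ.val.1 i) + cnt τ.val.1 ℓ ≥
          ∑ i ∈ Finset.univ.filter (· ≤ ℓ), w i := by
    rintro ⟨⟨f, g⟩, ⟨hf, hg, hfg⟩, hcont⟩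
    dsimp only
    have hw' : ∀ i, cnt f i + cnt g i = w i := fun i => congrFun hcont i
    refine ⟨cnt_sum f, fun ℓ => by have := hw' ℓ; omega, ?_⟩
    intro ℓ
    have hsplit : ∑ i ∈ Finset.univ.filter (· ≤ ℓ), w i
        = ∑ i ∈ Finset.univ.filter (· ≤ ℓ), cnt f i + ∑ i ∈ Finset.univ.filter (· ≤ ℓ), cnt g i := by
      rw [← Finset.sum_add_distrib]
      exact Finset.sum_congr rfl fun i _ => (hw' i).symm
    have hsub : (Finset.univ.filter fun t => g t ≤ ℓ) ⊆ Finset.univ.filter fun t => f t < ℓ := by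
      intro t ht
      simp only [Finset.mem_filter, Finset.mem_univ, true_and] at ht ⊢
      exact lt_of_lt_of_le (hfg t) ht
    have hcard := Finset.card_le_card hsub
    rw [← sum_cnt_le g ℓ, ← sum_cnt_lt' f ℓ] at hcard
    have hsplitf := sum_filter_le_split (cnt f) ℓ
    simp only at hsplitf hsplit hcard ⊢
    omega
  let F : {τ : (Fin k → Fin n) × (Fin k → Fin n) // IsSSYT τ ∧ content τ = w} →
      {ν : Fin n → ℕ // (∑ i, ν i) = k ∧ (∀ ℓ, ν ℓ ≤ w ℓ) ∧
        ∀ ℓ : Fin n, 2 * (∑ i ∈ Finset.univ.filter (· < ℓ), ν i) + ν ℓ ≥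
          ∑ i ∈ Finset.univ.filter (· ≤ ℓ), w i} :=
    fun τ => ⟨fun i => (Finset.univ.filter (fun t => τ.val.1 t = i)).card, Fprop τ⟩
  have hinj : Function.Injective F := by
    rintro ⟨⟨f, g⟩, ⟨hf, hg, hfg⟩, hcont⟩ ⟨⟨f', g'⟩, ⟨hf', hg', hfg'⟩, hcont'⟩ h
    have hν : cnt f = cnt f' := by
      funext i
      exact congrFun (congrArg Subtype.val h) i
    have hw1 : ∀ i, cnt f i + cnt g i = w i := fun i => congrFun hcont i
    have hw2 : ∀ i, cnt f' i + cnt g' i = w i := fun i => congrFun hcont' i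
    have hμ : cnt g = cnt g' := by
      funext i
      have h1 := hw1 i
      have h2 := hw2 i
      have h3 := congrFun hν i
      omega
    have e1 : f = f' := mono_ext f f' hf hf' hν
    have e2 : g = g' := mono_ext g g' hg hg' hμ
    apply Subtype.ext
    exact Prod.ext e1 e2
  have hsurj : Function.Surjective F := by
    rintro ⟨ν, hsum, hle, hdom⟩
    set μ : Fin n → ℕ := fun i => w i - ν i with hμdef
    have hνμ : ∀ i, ν i + μ i = w i := fun i => by
      have := hle i
      simp only [hμdef]
      omega
    have hμsum : ∑ i, μ i = k := by
      have : ∑ i, ν i + ∑ i, μ i = ∑ i, w i := by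
        rw [← Finset.sum_add_distrib]
        exact Finset.sum_congr rfl fun i _ => hνμ i
      omega
    set f := build ν hsum with hfdef
    set g := build μ hμsum with hgdef
    -- the key domination inequality in psum form
    have hkey : ∀ ℓ : Fin n, psum μ ((ℓ : ℕ) + 1) ≤ psum ν (ℓ : ℕ) := by
      intro ℓ
      have h1 := hdom ℓ
      have h2 : ∑ i ∈ Finset.univ.filter (· ≤ ℓ), w i
          = ∑ i ∈ Finset.univ.filter (· ≤ ℓ), ν i + ∑ i ∈ Finset.univ.filter (· ≤ ℓ), μ i := by
        rw [← Finset.sum_add_distrib]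
        exact Finset.sum_congr rfl fun i _ => (hνμ i).symm
      have h3 := sum_filter_le_split ν ℓ
      have h4 := sum_filter_le_split μ ℓ
      have h5 := psum_eq_sum_lt ν ℓ
      have h6 := psum_eq_sum_lt μ ℓ
      have h7 := psum_succ μ ℓ
      omega
    have hcol : ∀ t, f t < g t := by
      intro t
      have ht : (t : ℕ) < psum μ ((g t : ℕ) + 1) :=
        (build_char μ hμsum t ((g t : ℕ) + 1)).mp (by rw [← hgdef]; omega)
      have h2 : (t : ℕ) < psum ν (g t : ℕ) := lt_of_lt_of_le ht (hkey (g t))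
      have := (build_char ν hsum t (g t : ℕ)).mpr h2
      exact Fin.lt_def.mpr this
    have hcont : content (f, g) = w := by
      funext i
      have h1 : content (f, g) i = cnt f i + cnt g i := rfl
      rw [h1, build_cnt, build_cnt]
      exact hνμ i
    refine ⟨⟨(f, g), ⟨build_mono ν hsum, build_mono μ hμsum, hcol⟩, hcont⟩, ?_⟩
    apply Subtype.ext
    funext i
    exact build_cnt ν hsum i
  exact ⟨Equiv.ofBijective F ⟨hinj, hsurj⟩, fun τ => rfl⟩
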